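/- Fix an integer h ≥ 2 and let s_k = (h+1)^(2k)·h and t_k = (h+1)^(2k+1) for k ∈ ℕ. Let D = {ℓ ∈ ℕ : ℓ ≡ 0 (mod h+1) and s_k < ℓ < t_k for some k ∈ ℕ}. Then limsup_{n→∞} |D ∩ [0,n)| / n = 1/(h·(h+2)) and liminf_{n→∞} |D ∩ [0,n)| / n = 1/(h²·(h+1)·(h+2)). -/

import Mathlib

/-- `s_k = (h+1)^(2k) · h`. -/
def sk (h k : ℕ) : ℕ := (h + 1) ^ (2 * k) * h

/-- `t_k = (h+1)^(2k+1)`. -/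
def tk (h k : ℕ) : ℕ := (h + 1) ^ (2 * k + 1)

namespace DensityAux

open Finset Filter

/-- counting function -/
noncomputable def fD (h n : ℕ) : ℕ :=
  Nat.card {ℓ : ℕ // ℓ < n ∧ (h + 1) ∣ ℓ ∧ ∃ k, sk h k < ℓ ∧ ℓ < tk h k}

/-- multiples of `h+1` in the truncated block `k` -/
def cnt (h k n : ℕ) : ℕ :=
  ((Finset.Ioo (sk h k) (min (tk h k) n)).filter (fun ℓ => (h + 1) ∣ ℓ)).card

lemma card_dvd_Ioc (d a b : ℕ) :
    ((Finset.Ioc a b).filter (fun x => d ∣ x)).card = b / d - a / d := by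
  rcases le_or_gt a b with hab | hab
  · have hu : Finset.Ioc 0 a ∪ Finset.Ioc a b = Finset.Ioc 0 b :=
      Finset.Ioc_union_Ioc_eq_Ioc (Nat.zero_le a) hab
    have hdisj : Disjoint ((Finset.Ioc 0 a).filter (fun x => d ∣ x))
        ((Finset.Ioc a b).filter (fun x => d ∣ x)) := by
      simp only [Finset.disjoint_left, Finset.mem_filter, Finset.mem_Ioc]
      rintro x ⟨⟨_, hx⟩, _⟩ ⟨⟨hx', _⟩, _⟩
      omega
    have hc := Finset.card_union_of_disjoint hdisj
    rw [← Finset.filter_union, hu, Nat.Ioc_filter_dvd_card_eq_div,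
      Nat.Ioc_filter_dvd_card_eq_div] at hc
    have := Nat.div_le_div_right (c := d) hab
    omega
  · rw [Finset.Ioc_eq_empty (by omega)]
    have := Nat.div_le_div_right (c := d) hab.le
    simp [Nat.sub_eq_zero_of_le this]

lemma Ioo_eq_Ioc (a b : ℕ) : Finset.Ioo a b = Finset.Ioc a (b - 1) := by
  ext x; simp only [Finset.mem_Ioo, Finset.mem_Ioc]; omega

lemma cnt_zero (h n : ℕ) : cnt h 0 n = 0 := by
  have : Finset.Ioo (sk h 0) (min (tk h 0) n) ⊆ Finset.Ioo h (h + 1) := by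
    intro x hx
    simp only [Finset.mem_Ioo, sk, tk, pow_zero, one_mul, pow_one,
      mul_zero, zero_add] at hx ⊢
    omega
  rw [cnt, Finset.card_eq_zero, ← Finset.subset_empty]
  intro x hx
  rw [Finset.mem_filter] at hx
  have := this hx.1
  simp only [Finset.mem_Ioo] at this
  omega

lemma cnt_formula (h k n : ℕ) (hn : n ≤ tk h (k + 1)) :
    cnt h (k + 1) n = (n - 1) / (h + 1) - (h + 1) ^ (2 * k + 1) * h := by
  have hmin : min (tk h (k + 1)) n = n := min_eq_right hn
  have hsdiv : sk h (k + 1) / (h + 1) = (h + 1) ^ (2 * k + 1) * h := by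
    have hq : sk h (k + 1) = ((h + 1) ^ (2 * k + 1) * h) * (h + 1) := by
      rw [sk]; ring
    rw [hq, Nat.mul_div_cancel _ (Nat.succ_pos h)]
  rw [cnt, hmin, Ioo_eq_Ioc, card_dvd_Ioc, hsdiv]
lemma sk_lt_tk (h k : ℕ) : sk h k < tk h k := by
  rw [sk, tk, pow_succ]
  exact (Nat.mul_lt_mul_left (pow_pos (Nat.succ_pos h) _)).mpr (Nat.lt_succ_self h)

lemma sk_mono (h : ℕ) {k k' : ℕ} (hk : k ≤ k') : sk h k ≤ sk h k' :=
  Nat.mul_le_mul_right _ (Nat.pow_le_pow_right (Nat.succ_pos h) (by omega))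

lemma tk_mono (h : ℕ) {k k' : ℕ} (hk : k ≤ k') : tk h k ≤ tk h k' :=
  Nat.pow_le_pow_right (Nat.succ_pos h) (by omega)

lemma tk_lt_sk_succ {h : ℕ} (hh : 1 ≤ h) (k : ℕ) : tk h k < sk h (k + 1) := by
  have h1 : sk h (k + 1) = (h + 1) ^ (2 * k + 1) * ((h + 1) * h) := by
    rw [sk]; ring
  have h2 : tk h k = (h + 1) ^ (2 * k + 1) * 1 := by rw [tk]; ring
  rw [h1, h2]
  exact (Nat.mul_lt_mul_left (pow_pos (Nat.succ_pos h) _)).mpr (by nlinarith)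

lemma tk_le_sk {h : ℕ} (hh : 1 ≤ h) {k k' : ℕ} (hk : k < k') : tk h k ≤ sk h k' :=
  le_trans (tk_lt_sk_succ hh k).le (sk_mono h (by omega))

lemma cnt_full {h : ℕ} {k n : ℕ} (hn : tk h (k + 1) ≤ n) :
    cnt h (k + 1) n = (h + 1) ^ (2 * k + 1) - 1 := by
  have hc : cnt h (k + 1) n = cnt h (k + 1) (tk h (k + 1)) := by
    rw [cnt, cnt, min_eq_left hn, min_eq_left le_rfl]
  rw [hc, cnt_formula h k _ le_rfl]
  set Z := (h + 1) ^ (2 * k + 1) with hZ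
  have hZ1 : 1 ≤ Z := Nat.one_le_pow _ _ (Nat.succ_pos h)
  set a := (h + 1) * Z with ha
  have ha1 : 1 ≤ a := by
    have : 0 < (h + 1) * Z := Nat.mul_pos (Nat.succ_pos h) hZ1
    omega
  have hY : tk h (k + 1) = (h + 1) * a := by rw [tk, ha, hZ]; ring
  have e1 : (h + 1) * a = (h + 1) * (a - 1) + (h + 1) := by
    conv_lhs => rw [← Nat.sub_add_cancel ha1]
    ring
  have h2 : tk h (k + 1) - 1 = (h + 1) * (a - 1) + h := by omega
  have hdiv : (tk h (k + 1) - 1) / (h + 1) = a - 1 := by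
    rw [h2, Nat.mul_add_div (Nat.succ_pos h), Nat.div_eq_of_lt (Nat.lt_succ_self h),
      Nat.add_zero]
  rw [hdiv]
  have e2 : a = Z * h + Z := by rw [ha]; ring
  omega
lemma fD_eq_sum {h : ℕ} (hh : 1 ≤ h) {K n : ℕ} (hn : n ≤ tk h K) :
    fD h n = ∑ k ∈ Finset.range (K + 1), cnt h k n := by
  classical
  have hset : {ℓ : ℕ | ℓ < n ∧ (h + 1) ∣ ℓ ∧ ∃ k, sk h k < ℓ ∧ ℓ < tk h k} =
      ↑((Finset.range (K + 1)).biUnion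
        (fun k => (Finset.Ioo (sk h k) (min (tk h k) n)).filter (fun ℓ => (h + 1) ∣ ℓ))) := by
    ext ℓ
    simp only [Set.mem_setOf_eq, Finset.coe_biUnion, Set.mem_iUnion, Finset.mem_coe,
      Finset.mem_filter, Finset.mem_Ioo, Finset.mem_range, lt_min_iff]
    constructor
    · rintro ⟨hℓn, hdvd, k, hs, ht⟩
      refine ⟨k, ?_, ⟨hs, ht, hℓn⟩, hdvd⟩
      by_contra hk
      push_neg at hk
      have : tk h K ≤ sk h k := tk_le_sk hh (by omega)
      omega
    · rintro ⟨k, _, ⟨hs, ht, hℓn⟩, hdvd⟩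
      exact ⟨hℓn, hdvd, k, hs, ht⟩
  have hcard : fD h n =
      ({ℓ : ℕ | ℓ < n ∧ (h + 1) ∣ ℓ ∧ ∃ k, sk h k < ℓ ∧ ℓ < tk h k}).ncard := by
    rw [← Nat.card_coe_set_eq]
    rfl
  rw [hcard, hset, Set.ncard_coe_finset, Finset.card_biUnion]
  · simp [cnt]
  · intro k hk k' hk' hkk
    simp only [Finset.disjoint_left, Finset.mem_filter, Finset.mem_Ioo, lt_min_iff]
    rintro x ⟨⟨hs, ht, _⟩, _⟩ ⟨⟨hs', ht', _⟩, _⟩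
    rcases lt_or_gt_of_ne hkk with hlt | hlt
    · have : tk h k ≤ sk h k' := tk_le_sk hh hlt
      omega
    · have : tk h k' ≤ sk h k := tk_le_sk hh hlt
      omega
lemma fD_decomp {h : ℕ} (hh : 1 ≤ h) {K n : ℕ} (h1 : tk h K ≤ n) (h2 : n ≤ tk h (K + 1)) :
    fD h n = fD h (tk h K) + cnt h (K + 1) n := by
  rw [fD_eq_sum hh h2, Finset.sum_range_succ, fD_eq_sum hh (le_refl (tk h K))]
  congr 1
  refine Finset.sum_congr rfl fun k hk => ?_
  rw [Finset.mem_range] at hk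
  have htk : tk h k ≤ tk h K := tk_mono h (by omega)
  rw [cnt, cnt, min_eq_left (le_trans htk h1), min_eq_left htk]

lemma fD_t0 {h : ℕ} (hh : 1 ≤ h) : fD h (tk h 0) = 0 := by
  rw [fD_eq_sum hh (le_refl (tk h 0))]
  simp [cnt_zero]

lemma fD_tk_closed {h : ℕ} (hh : 1 ≤ h) (K : ℕ) :
    (h + 1) ^ (2 * K + 1) =
      (h * (h + 2)) * fD h (tk h K) + K * (h * (h + 2)) + (h + 1) := by
  induction K with
  | zero => simp [fD_t0 hh]
  | succ K ih =>
    have hdec : fD h (tk h (K + 1)) = fD h (tk h K) + cnt h (K + 1) (tk h (K + 1)) :=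
      fD_decomp hh (tk_mono h (by omega)) le_rfl
    rw [hdec, cnt_full le_rfl]
    have hp : (h + 1) ^ (2 * (K + 1) + 1) = (h + 1) ^ (2 * K + 1) * (h + 1) ^ 2 := by
      rw [show 2*(K+1)+1 = (2*K+1)+2 by ring, pow_add]
    rw [hp]
    set Z := (h + 1) ^ (2 * K + 1) with hZdef
    have hZ1 : 1 ≤ Z := Nat.one_le_pow _ _ (Nat.succ_pos h)
    set F := fD h (tk h K) with hF
    zify [hZ1] at ih ⊢
    linear_combination ih

lemma fD_sk {h : ℕ} (hh : 1 ≤ h) (K : ℕ) : fD h (sk h (K + 1)) = fD h (tk h K) := by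
  have h1 : tk h K ≤ sk h (K + 1) := (tk_lt_sk_succ hh K).le
  have h2 : sk h (K + 1) ≤ tk h (K + 1) := (sk_lt_tk h (K + 1)).le
  rw [fD_decomp hh h1 h2, cnt, min_eq_right h2]
  simp
lemma self_lt_tk {h : ℕ} (hh : 1 ≤ h) (k : ℕ) : k < tk h k := by
  calc k < (h + 1) ^ k := Nat.lt_pow_self (by omega)
  _ ≤ tk h k := Nat.pow_le_pow_right (Nat.succ_pos h) (by omega)

lemma exists_K {h : ℕ} (hh : 1 ≤ h) {n K₀ : ℕ} (hn : tk h K₀ ≤ n) :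
    ∃ K, K₀ ≤ K ∧ tk h K ≤ n ∧ n < tk h (K + 1) := by
  classical
  have hK₀n : K₀ ≤ n := le_trans (self_lt_tk hh K₀).le hn
  set K := Nat.findGreatest (fun j => tk h j ≤ n) n with hK
  have hspec : tk h K ≤ n :=
    Nat.findGreatest_spec (P := fun j => tk h j ≤ n) hK₀n hn
  have hge : K₀ ≤ K := Nat.le_findGreatest (P := fun j => tk h j ≤ n) hK₀n hn
  refine ⟨K, hge, hspec, ?_⟩
  by_contra hc
  push_neg at hc
  have hle : K + 1 ≤ n := le_trans (self_lt_tk hh _).le hc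
  have h2 : K + 1 ≤ K := Nat.le_findGreatest (P := fun j => tk h j ≤ n) hle hc
  omega

lemma cnt_top_lt {h K n : ℕ} (hn : n ≤ tk h (K + 1)) (hr : cnt h (K + 1) n ≠ 0) :
    (h + 1) * ((h + 1) ^ (2 * K + 1) * h) + (h + 1) * cnt h (K + 1) n < n := by
  set q := h + 1 with hq
  set B := (h + 1) ^ (2 * K + 1) * h with hB
  have hf : cnt h (K + 1) n = (n - 1) / q - B := cnt_formula h K n hn
  rcases Nat.eq_zero_or_pos n with rfl | hn1
  · exfalso; apply hr; rw [hf]; simp [Nat.zero_sub, Nat.zero_div]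
  obtain ⟨m, rfl⟩ : ∃ m, n = m + 1 := ⟨n - 1, by omega⟩
  set d := m / q with hd
  have hfm : cnt h (K + 1) (m + 1) = d - B := by rw [hf]; simp; rfl
  have h1 : d = B + cnt h (K + 1) (m + 1) := by omega
  have h2 : q * d = q * B + q * cnt h (K + 1) (m + 1) := by rw [h1, Nat.mul_add]
  have h3 : q * d ≤ m := Nat.mul_div_le m q
  calc q * B + q * cnt h (K + 1) (m + 1) = q * d := h2.symm
  _ ≤ m := h3
  _ < m + 1 := Nat.lt_succ_self m

lemma cnt_top_ge {h K n : ℕ} (hn : n ≤ tk h (K + 1)) :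
    n ≤ (h + 1) * ((h + 1) ^ (2 * K + 1) * h) + (h + 1) * cnt h (K + 1) n + (h + 1) := by
  set q := h + 1 with hq
  set B := (h + 1) ^ (2 * K + 1) * h with hB
  have hf : cnt h (K + 1) n = (n - 1) / q - B := cnt_formula h K n hn
  rcases Nat.eq_zero_or_pos n with rfl | hn1
  · omega
  obtain ⟨m, rfl⟩ : ∃ m, n = m + 1 := ⟨n - 1, by omega⟩
  set d := m / q with hd
  have hfm : cnt h (K + 1) (m + 1) = d - B := by rw [hf]; simp; rfl
  have hdm : q * d + m % q = m := Nat.div_add_mod m q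
  have hmlt : m % q < q := Nat.mod_lt _ (by omega)
  have h5 : m < q * d + q := by omega
  rcases le_or_gt B d with hc | hc
  · have h1 : d = B + cnt h (K + 1) (m + 1) := by omega
    have h2 : q * d = q * B + q * cnt h (K + 1) (m + 1) := by rw [h1, Nat.mul_add]
    omega
  · have h1 : cnt h (K + 1) (m + 1) = 0 := by omega
    have h2 : q * (d + 1) ≤ q * B := Nat.mul_le_mul_left q hc
    have h3 : q * (d + 1) = q * d + q := by ring
    omega
set_option maxHeartbeats 2000000 in
lemma main_ub {h : ℕ} (hh : 2 ≤ h) (n : ℕ) : (h * (h + 2)) * fD h n ≤ n := by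
  have hh1 : 1 ≤ h := by omega
  rcases le_or_gt n (tk h 0) with hn | hn
  · have hfd : fD h n = cnt h 0 n := by
      rw [fD_eq_sum hh1 hn]; simp
    rw [hfd, cnt_zero]; simp
  · obtain ⟨K, -, h1, h2⟩ := exists_K hh1 (K₀ := 0) hn.le
    have hdec := fD_decomp hh1 h1 h2.le
    have hcf := fD_tk_closed hh1 K
    set X := (h + 1) ^ (2 * K + 1) with hX
    set F := fD h (tk h K) with hF
    set r := cnt h (K + 1) n with hr
    have htK : tk h K = X := rfl
    have htK1 : tk h (K + 1) = X * (h + 1) ^ 2 := by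
      rw [tk, hX, show 2 * (K + 1) + 1 = (2 * K + 1) + 2 by ring, pow_add]
    rw [hdec]
    rcases Nat.eq_zero_or_pos r with hr0 | hr0
    · rw [hr0]
      simp only [Nat.add_zero]
      rw [htK] at h1
      omega
    · have hbnd : (h + 1) * (X * h) + (h + 1) * r < n := cnt_top_lt h2.le (by omega)
      rw [htK1] at h2
      rw [htK] at h1
      -- pass to integers
      zify at hcf hbnd h2 h1 ⊢
      set H := (h : ℤ) with hH
      have hH2 : (2 : ℤ) ≤ H := by rw [hH]; exact_mod_cast hh
      have hXpos : (0 : ℤ) ≤ (X : ℤ) := by positivity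
      have hFpos : (0 : ℤ) ≤ (F : ℤ) := by positivity
      have hrpos : (0 : ℤ) ≤ (r : ℤ) := by positivity
      have hKpos : (0 : ℤ) ≤ (K : ℤ) := by positivity
      have hnpos : (0 : ℤ) ≤ (n : ℤ) := by positivity
      have key : (H + 1) * ((H * (H + 2)) * ((F : ℤ) + r)) ≤ (H + 1) * n := by
        have k5 : (0 : ℤ) ≤ H * (H + 2) := by nlinarith [hH2]
        have k6 : (0 : ℤ) ≤ H * H + H - 1 := by nlinarith [hH2]
        have k1 : (H + 1) * ((H * (H + 2)) * (F : ℤ)) =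
            (H + 1) * X - (H + 1) * ((K : ℤ) * (H * (H + 2))) - (H + 1) * (H + 1) := by
          linear_combination (-(H + 1)) * hcf
        have k2 : (H * (H + 2)) * ((H + 1) * (r : ℤ)) ≤
            (H * (H + 2)) * ((n : ℤ) - 1 - (H + 1) * (X * H)) := by
          apply mul_le_mul_of_nonneg_left _ k5
          linarith
        have k3 : (H * H + H - 1) * (n : ℤ) ≤ (H * H + H - 1) * ((X : ℤ) * (H + 1) ^ 2) := by
          apply mul_le_mul_of_nonneg_left _ k6
          linarith
        have k4 : (0 : ℤ) ≤ (K : ℤ) * (H * (H + 2)) := mul_nonneg hKpos k5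
        have k4' : (0 : ℤ) ≤ (H + 1) * ((K : ℤ) * (H * (H + 2))) :=
          mul_nonneg (by linarith) k4
        have k7 : (0 : ℤ) ≤ (H + 1) * (H + 1) := mul_nonneg (by linarith) (by linarith)
        linarith [k1, k2, k3, k4', k5, k7]
      have hpos : (0 : ℤ) < H + 1 := by linarith
      have hfin := le_of_mul_le_mul_left key hpos
      push_cast at hfin ⊢
      linarith
set_option maxHeartbeats 2000000 in
lemma main_lb {h : ℕ} (hh : 2 ≤ h) {K n : ℕ} (h1 : tk h K ≤ n) (h2 : n ≤ tk h (K + 1)) :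
    n ≤ (h + 1) ^ 5 * (K + 1) + ((h + 1) * h * (h * (h + 2))) * fD h n := by
  have hh1 : 1 ≤ h := by omega
  have hdec := fD_decomp hh1 h1 h2
  have hcf := fD_tk_closed hh1 K
  set X := (h + 1) ^ (2 * K + 1) with hX
  set F := fD h (tk h K) with hF
  set r := cnt h (K + 1) n with hr
  have htK : tk h K = X := rfl
  have hbnd : n ≤ (h + 1) * (X * h) + (h + 1) * r + (h + 1) := cnt_top_ge h2
  rw [hdec, htK] at *
  zify at hcf hbnd h1 ⊢
  set H := (h : ℤ) with hH
  have hH2 : (2 : ℤ) ≤ H := by rw [hH]; exact_mod_cast hh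
  have hXpos : (0 : ℤ) ≤ (X : ℤ) := by positivity
  have hFpos : (0 : ℤ) ≤ (F : ℤ) := by positivity
  have hrpos : (0 : ℤ) ≤ (r : ℤ) := by positivity
  have hKpos : (0 : ℤ) ≤ (K : ℤ) := by positivity
  have hnpos : (0 : ℤ) ≤ (n : ℤ) := by positivity
  have k5 : (0 : ℤ) ≤ H * (H + 2) := by nlinarith [hH2]
  have kHA : (0 : ℤ) ≤ H * (H * (H + 2)) := mul_nonneg (by linarith) k5
  have kE : (H + 1) * (H * ((H * (H + 2)) * (F : ℤ))) =
      (H + 1) * (H * (X : ℤ)) - (H + 1) * (H * ((K : ℤ) * (H * (H + 2))))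
        - (H + 1) * (H * (H + 1)) := by
    linear_combination (-(H + 1) * H) * hcf
  have p1 : (H + 1) * H * (H * (H + 2)) ≤ (H + 1) ^ 5 := by nlinarith [hH2]
  have q1 : (0 : ℤ) ≤ (K : ℤ) * ((H + 1) ^ 5 - (H + 1) * H * (H * (H + 2))) :=
    mul_nonneg hKpos (by linarith)
  have p2 : H * (H + 1) * (H + 1) ≤ (H + 1) ^ 5 := by nlinarith [hH2]
  have kMr : (0 : ℤ) ≤ (H + 1) * H * (H * (H + 2)) * (r : ℤ) :=
    mul_nonneg (mul_nonneg (mul_nonneg (by linarith) (by linarith)) k5) hrpos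
  rcases le_or_gt (n : ℤ) ((H + 1) * ((X : ℤ) * H)) with hcase | hcase
  · -- below the start of block K+1
    push_cast at kE q1 kMr ⊢
    linarith [kE, q1, kMr, p2, hcase]
  · -- inside block K+1
    have kr : (H * (H * (H + 2))) * ((H + 1) * (r : ℤ)) ≥
        (H * (H * (H + 2))) * ((n : ℤ) - (H + 1) * ((X : ℤ) * H) - (H + 1)) := by
      apply mul_le_mul_of_nonneg_left _ kHA
      linarith
    have q0 : (0 : ℤ) ≤ (H * (H * (H + 2)) - 1) * ((n : ℤ) - (H + 1) * ((X : ℤ) * H)) :=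
      mul_nonneg (by nlinarith [hH2]) (by linarith)
    have p3 : H * (H + 1) * (H + 1) + H * (H * (H + 2)) * (H + 1) ≤ (H + 1) ^ 5 := by
      nlinarith [hH2]
    push_cast at kE q1 kr q0 ⊢
    linarith [kE, q1, kr, q0, p3]
open Filter Topology in
lemma aux_lim0 {h : ℕ} (hh : 2 ≤ h) (c1 c2 : ℝ) :
    Tendsto (fun K : ℕ => (c1 * K + c2) / ((h : ℝ) + 1) ^ (2 * K + 1)) atTop (𝓝 0) := by
  have hq0 : ((h : ℝ) + 1) ≠ 0 := by positivity
  have hq1 : (1 : ℝ) < (h : ℝ) + 1 := by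
    have : (1 : ℝ) ≤ (h : ℝ) := by exact_mod_cast (by omega : 1 ≤ h)
    linarith
  have hr : |1 / ((h : ℝ) + 1) ^ 2| < 1 := by
    rw [abs_of_pos (by positivity)]
    rw [div_lt_one (by positivity)]
    nlinarith
  have T1 := tendsto_pow_const_mul_const_pow_of_abs_lt_one 1 hr
  have T2 := tendsto_pow_const_mul_const_pow_of_abs_lt_one 0 hr
  have heq : (fun K : ℕ => (c1 * K + c2) / ((h : ℝ) + 1) ^ (2 * K + 1)) =
      fun K : ℕ => (c1 / ((h : ℝ) + 1)) * ((K : ℝ) ^ 1 * (1 / ((h : ℝ) + 1) ^ 2) ^ K)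
        + (c2 / ((h : ℝ) + 1)) * ((K : ℝ) ^ 0 * (1 / ((h : ℝ) + 1) ^ 2) ^ K) := by
    funext K
    have hpow : ((h : ℝ) + 1) ^ (2 * K + 1) = ((h : ℝ) + 1) * (((h : ℝ) + 1) ^ 2) ^ K := by
      rw [← pow_mul, ← pow_succ']
    have hpK : (((h : ℝ) + 1) ^ 2) ^ K ≠ 0 := by positivity
    rw [hpow]
    field_simp
    rw [one_div, inv_pow, mul_inv_cancel_right₀ hpK]
  rw [heq]
  have := (T1.const_mul (c1 / ((h : ℝ) + 1))).add (T2.const_mul (c2 / ((h : ℝ) + 1)))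
  simpa using this

lemma closed_real {h : ℕ} (hh : 2 ≤ h) (K : ℕ) :
    (fD h (tk h K) : ℝ) =
      (((h : ℝ) + 1) ^ (2 * K + 1) - K * ((h : ℝ) * ((h : ℝ) + 2)) - ((h : ℝ) + 1)) /
        ((h : ℝ) * ((h : ℝ) + 2)) := by
  have hc := fD_tk_closed (by omega : 1 ≤ h) K
  have hA : ((h : ℝ) * ((h : ℝ) + 2)) ≠ 0 := by
    have : (2 : ℝ) ≤ (h : ℝ) := by exact_mod_cast hh
    positivity
  rw [eq_div_iff hA]
  have hcast : (((h + 1) ^ (2 * K + 1) : ℕ) : ℝ) =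
      ((h * (h + 2) * fD h (tk h K) + K * (h * (h + 2)) + (h + 1) : ℕ) : ℝ) := by
    exact_mod_cast congrArg (fun m : ℕ => (m : ℝ)) hc
  push_cast at hcast
  linarith

lemma tk_real {h : ℕ} (K : ℕ) : ((tk h K : ℕ) : ℝ) = ((h : ℝ) + 1) ^ (2 * K + 1) := by
  rw [tk]; push_cast; ring

lemma sk_real {h : ℕ} (K : ℕ) :
    ((sk h (K + 1) : ℕ) : ℝ) = ((h : ℝ) + 1) ^ (2 * K + 1) * (((h : ℝ) + 1) * (h : ℝ)) := by
  rw [sk]; push_cast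
  rw [show 2 * (K + 1) = (2 * K + 1) + 1 by ring, pow_succ]
  ring

open Filter Topology in
lemma tendsto_u_tk {h : ℕ} (hh : 2 ≤ h) :
    Tendsto (fun K : ℕ => (fD h (tk h K) : ℝ) / (tk h K)) atTop
      (𝓝 (1 / ((h : ℝ) * ((h : ℝ) + 2)))) := by
  have hA : (0 : ℝ) < (h : ℝ) * ((h : ℝ) + 2) := by
    have : (2 : ℝ) ≤ (h : ℝ) := by exact_mod_cast hh
    positivity
  have heq : (fun K : ℕ => (fD h (tk h K) : ℝ) / (tk h K)) =
      fun K : ℕ => 1 / ((h : ℝ) * ((h : ℝ) + 2)) -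
        (1 / ((h : ℝ) * ((h : ℝ) + 2))) *
          ((((h : ℝ) * ((h : ℝ) + 2)) * K + ((h : ℝ) + 1)) / ((h : ℝ) + 1) ^ (2 * K + 1)) := by
    funext K
    rw [closed_real hh K, tk_real K]
    have hX : ((h : ℝ) + 1) ^ (2 * K + 1) ≠ 0 := by positivity
    field_simp
    ring
  rw [heq]
  have := (tendsto_const_nhds :
      Tendsto (fun _ : ℕ => 1 / ((h : ℝ) * ((h : ℝ) + 2))) atTop (𝓝 (1 / ((h : ℝ) * ((h : ℝ) + 2)))))
    |>.sub ((aux_lim0 hh ((h : ℝ) * ((h : ℝ) + 2)) ((h : ℝ) + 1)).const_mul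
      (1 / ((h : ℝ) * ((h : ℝ) + 2))))
  simpa using this

open Filter Topology in
lemma tendsto_u_sk {h : ℕ} (hh : 2 ≤ h) :
    Tendsto (fun K : ℕ => (fD h (sk h (K + 1)) : ℝ) / (sk h (K + 1))) atTop
      (𝓝 (1 / ((h : ℝ) ^ 2 * ((h : ℝ) + 1) * ((h : ℝ) + 2)))) := by
  have h2 : (2 : ℝ) ≤ (h : ℝ) := by exact_mod_cast hh
  have hB : (0 : ℝ) < (h : ℝ) ^ 2 * ((h : ℝ) + 1) * ((h : ℝ) + 2) := by positivity
  have heq : (fun K : ℕ => (fD h (sk h (K + 1)) : ℝ) / (sk h (K + 1))) =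
      fun K : ℕ => 1 / ((h : ℝ) ^ 2 * ((h : ℝ) + 1) * ((h : ℝ) + 2)) -
        (1 / ((h : ℝ) ^ 2 * ((h : ℝ) + 1) * ((h : ℝ) + 2))) *
          ((((h : ℝ) * ((h : ℝ) + 2)) * K + ((h : ℝ) + 1)) / ((h : ℝ) + 1) ^ (2 * K + 1)) := by
    funext K
    rw [fD_sk (by omega : 1 ≤ h) K, closed_real hh K, sk_real K]
    have hX : ((h : ℝ) + 1) ^ (2 * K + 1) ≠ 0 := by positivity
    field_simp
    ring
  rw [heq]
  have := (tendsto_const_nhds :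
      Tendsto (fun _ : ℕ => 1 / ((h : ℝ) ^ 2 * ((h : ℝ) + 1) * ((h : ℝ) + 2))) atTop
        (𝓝 (1 / ((h : ℝ) ^ 2 * ((h : ℝ) + 1) * ((h : ℝ) + 2)))))
    |>.sub ((aux_lim0 hh ((h : ℝ) * ((h : ℝ) + 2)) ((h : ℝ) + 1)).const_mul
      (1 / ((h : ℝ) ^ 2 * ((h : ℝ) + 1) * ((h : ℝ) + 2))))
  simpa using this
lemma fD_le_self {h : ℕ} (hh : 2 ≤ h) (n : ℕ) : fD h n ≤ n := by
  have h1 := main_ub hh n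
  have h2 : fD h n ≤ h * (h + 2) * fD h n :=
    Nat.le_mul_of_pos_left _ (Nat.mul_pos (by omega) (by omega))
  omega

lemma u_le_one {h : ℕ} (hh : 2 ≤ h) (n : ℕ) : (fD h n : ℝ) / n ≤ 1 := by
  rcases Nat.eq_zero_or_pos n with rfl | hn
  · simp
  · rw [div_le_one (by exact_mod_cast hn)]
    exact_mod_cast fD_le_self hh n

open Filter Topology in
lemma tendsto_tk_atTop {h : ℕ} (hh : 2 ≤ h) : Tendsto (tk h) atTop atTop :=
  tendsto_atTop_mono (fun K => (self_lt_tk (by omega) K).le) tendsto_id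

open Filter Topology in
lemma tendsto_sk_atTop {h : ℕ} (hh : 2 ≤ h) :
    Tendsto (fun K => sk h (K + 1)) atTop atTop :=
  tendsto_atTop_mono
    (fun K => le_trans (self_lt_tk (by omega) K).le (tk_lt_sk_succ (by omega) K).le)
    tendsto_id

open Filter Topology in
lemma limsup_ge_aux {h : ℕ} (hh : 2 ≤ h) :
    1 / ((h : ℝ) * ((h : ℝ) + 2)) ≤ limsup (fun n : ℕ => (fD h n : ℝ) / n) atTop := by
  set u := fun n : ℕ => (fD h n : ℝ) / n with hu
  have htc : Tendsto (u ∘ tk h) atTop (𝓝 (1 / ((h : ℝ) * ((h : ℝ) + 2)))) := tendsto_u_tk hh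
  have hmap : map (tk h) atTop ≤ atTop := (tendsto_tk_atTop hh)
  have hlim : limsup u (map (tk h) atTop) = 1 / ((h : ℝ) * ((h : ℝ) + 2)) := by
    have : Tendsto u (map (tk h) atTop) (𝓝 (1 / ((h : ℝ) * ((h : ℝ) + 2)))) := by
      rw [tendsto_map'_iff]; exact htc
    exact this.limsup_eq
  rw [← hlim]
  refine limsup_le_limsup_of_le hmap ?_ ?_
  · have hx := (htc.isBoundedUnder_ge).isCoboundedUnder_le
    simp only [Filter.IsCoboundedUnder, Filter.map_map] at hx ⊢
    exact hx
  · exact isBoundedUnder_of ⟨1, fun n => u_le_one hh n⟩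

open Filter Topology in
lemma limsup_le_aux {h : ℕ} (hh : 2 ≤ h) :
    limsup (fun n : ℕ => (fD h n : ℝ) / n) atTop ≤ 1 / ((h : ℝ) * ((h : ℝ) + 2)) := by
  have hA : (0 : ℝ) < (h : ℝ) * ((h : ℝ) + 2) := by
    have : (2 : ℝ) ≤ (h : ℝ) := by exact_mod_cast hh
    positivity
  refine limsup_le_of_le ?_ ?_
  · exact (isBoundedUnder_of ⟨0, fun n => by positivity⟩).isCoboundedUnder_le
  · filter_upwards [eventually_ge_atTop 1] with n hn
    have hn0 : (0 : ℝ) < n := by exact_mod_cast hn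
    rw [div_le_div_iff₀ hn0 hA]
    have := main_ub hh n
    have hcast : ((h : ℝ) * ((h : ℝ) + 2)) * (fD h n : ℝ) ≤ n := by exact_mod_cast this
    linarith

open Filter Topology in
lemma liminf_le_aux {h : ℕ} (hh : 2 ≤ h) :
    liminf (fun n : ℕ => (fD h n : ℝ) / n) atTop ≤
      1 / ((h : ℝ) ^ 2 * ((h : ℝ) + 1) * ((h : ℝ) + 2)) := by
  set u := fun n : ℕ => (fD h n : ℝ) / n with hu
  have htc : Tendsto (u ∘ fun K => sk h (K + 1)) atTop
      (𝓝 (1 / ((h : ℝ) ^ 2 * ((h : ℝ) + 1) * ((h : ℝ) + 2)))) := tendsto_u_sk hh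
  have hmap : map (fun K => sk h (K + 1)) atTop ≤ atTop := (tendsto_sk_atTop hh)
  have hlim : limsInf (map u (map (fun K => sk h (K + 1)) atTop)) =
      1 / ((h : ℝ) ^ 2 * ((h : ℝ) + 1) * ((h : ℝ) + 2)) := by
    have : Tendsto u (map (fun K => sk h (K + 1)) atTop)
        (𝓝 (1 / ((h : ℝ) ^ 2 * ((h : ℝ) + 1) * ((h : ℝ) + 2)))) := by
      rw [tendsto_map'_iff]; exact htc
    exact this.liminf_eq
  rw [← hlim]
  refine liminf_le_liminf_of_le hmap ?_ ?_
  · exact isBoundedUnder_of ⟨0, fun n => by positivity⟩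
  · have hx := (htc.isBoundedUnder_le).isCoboundedUnder_ge
    simp only [Filter.IsCoboundedUnder, Filter.map_map] at hx ⊢
    exact hx
open Filter Topology in
lemma liminf_ge_aux {h : ℕ} (hh : 2 ≤ h) :
    1 / ((h : ℝ) ^ 2 * ((h : ℝ) + 1) * ((h : ℝ) + 2)) ≤
      liminf (fun n : ℕ => (fD h n : ℝ) / n) atTop := by
  have h2 : (2 : ℝ) ≤ (h : ℝ) := by exact_mod_cast hh
  set B : ℝ := (h : ℝ) ^ 2 * ((h : ℝ) + 1) * ((h : ℝ) + 2) with hB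
  have hBpos : (0 : ℝ) < B := by rw [hB]; positivity
  set C : ℝ := ((h : ℝ) + 1) ^ 5 with hC
  apply le_of_forall_sub_le
  intro ε hε
  have hev : ∀ᶠ n in atTop, 1 / B - ε ≤ (fD h n : ℝ) / n := by
    -- choose K₀
    have hlt : (0 : ℝ) < ε * B := by positivity
    have hltK := (aux_lim0 hh C C).eventually_lt_const hlt
    rw [eventually_atTop] at hltK
    obtain ⟨K₀, hK₀⟩ := hltK
    filter_upwards [eventually_ge_atTop (tk h K₀), eventually_ge_atTop 1] with n hn hn1
    obtain ⟨K, hKK₀, hK1, hK2⟩ := exists_K (by omega : 1 ≤ h) hn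
    have hlb := main_lb hh hK1 hK2.le
    have hcast : (n : ℝ) ≤ C * (K + 1) + (((h : ℝ) + 1) * (h : ℝ) * ((h : ℝ) * ((h : ℝ) + 2)))
        * (fD h n : ℝ) := by
      have h' : ((n : ℕ) : ℝ) ≤
          (((h + 1) ^ 5 * (K + 1) + (h + 1) * h * (h * (h + 2)) * fD h n : ℕ) : ℝ) := by
        exact_mod_cast hlb
      push_cast at h'
      rw [hC]
      push_cast
      linarith
    have hMB : ((h : ℝ) + 1) * (h : ℝ) * ((h : ℝ) * ((h : ℝ) + 2)) = B := by rw [hB]; ring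
    rw [hMB] at hcast
    have hCK : C * K + C < ε * B * ((h : ℝ) + 1) ^ (2 * K + 1) := by
      have := hK₀ K hKK₀
      have hXpos : (0 : ℝ) < ((h : ℝ) + 1) ^ (2 * K + 1) := by positivity
      rw [div_lt_iff₀ hXpos] at this
      linarith
    have hXn : ((h : ℝ) + 1) ^ (2 * K + 1) ≤ (n : ℝ) := by
      rw [← tk_real (h := h) K]
      exact_mod_cast hK1
    have hn0 : (0 : ℝ) < n := by exact_mod_cast hn1
    have key : (n : ℝ) - ε * B * n ≤ B * fD h n := by
      have hεB : (0 : ℝ) ≤ ε * B := le_of_lt hlt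
      have : ε * B * ((h : ℝ) + 1) ^ (2 * K + 1) ≤ ε * B * n :=
        mul_le_mul_of_nonneg_left hXn hεB
      nlinarith [hcast, hCK, this]
    rw [le_div_iff₀ hn0]
    have expand : (1 / B - ε) * n = (1 / B) * ((n : ℝ) - ε * B * n) := by
      field_simp
    calc (1 / B - ε) * n = (1 / B) * ((n : ℝ) - ε * B * n) := expand
    _ ≤ (1 / B) * (B * fD h n) := by
        apply mul_le_mul_of_nonneg_left key (by positivity)
    _ = fD h n := by field_simp
  have hcob : IsCoboundedUnder (· ≥ ·) atTop (fun n : ℕ => (fD h n : ℝ) / n) :=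
    (isBoundedUnder_of ⟨1, fun n => u_le_one hh n⟩).isCoboundedUnder_ge
  exact le_liminf_of_le hcob hev
end DensityAux

/-- Fix `h ≥ 2` and let
`D = {ℓ : (h+1) ∣ ℓ and s_k < ℓ < t_k for some k}`.  Then
`limsup_n |D ∩ [0,n)|/n = 1/(h(h+2))` and
`liminf_n |D ∩ [0,n)|/n = 1/(h²(h+1)(h+2))`. -/
theorem density_of_parity_positions (h : ℕ) (hh : 2 ≤ h) :
    Filter.limsup (fun n : ℕ =>
        (Nat.card {ℓ : ℕ // ℓ < n ∧ (h + 1) ∣ ℓ ∧ ∃ k, sk h k < ℓ ∧ ℓ < tk h k} : ℝ) / n)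
        Filter.atTop = 1 / ((h : ℝ) * ((h : ℝ) + 2)) ∧
    Filter.liminf (fun n : ℕ =>
        (Nat.card {ℓ : ℕ // ℓ < n ∧ (h + 1) ∣ ℓ ∧ ∃ k, sk h k < ℓ ∧ ℓ < tk h k} : ℝ) / n)
        Filter.atTop = 1 / ((h : ℝ) ^ 2 * ((h : ℝ) + 1) * ((h : ℝ) + 2)) := by
  have heq : (fun n : ℕ =>
      (Nat.card {ℓ : ℕ // ℓ < n ∧ (h + 1) ∣ ℓ ∧ ∃ k, sk h k < ℓ ∧ ℓ < tk h k} : ℝ) / n) =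
      fun n : ℕ => (DensityAux.fD h n : ℝ) / n := rfl
  rw [heq]
  constructor
  · exact le_antisymm (DensityAux.limsup_le_aux hh) (DensityAux.limsup_ge_aux hh)
  · exact le_antisymm (DensityAux.liminf_le_aux hh) (DensityAux.liminf_ge_aux hh)
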